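/- Let 0 ≤ α < π/2 and let A, B be n×n complex matrices whose numerical ranges are contained in the sector S_α. Then for every t ∈ [0,1], with r = min{t, 1−t}, in the Loewner order, ℜ(A !_t B) ≤ sec²(α)·( ℜ((1−t)A + tB) − 2r·( ℜ((A+B)/2) − (ℜA) ! (ℜB) ) ), where A !_t B = ((1−t)A^{-1} + tB^{-1})^{-1} and X ! Y = ((X^{-1}+Y^{-1})/2)^{-1}. -/

import Mathlib

open Matrix ComplexOrder

/-- The real part `ℜA = (A + A^*)/2` of a square complex matrix. -/
noncomputable def reMat {n : ℕ} (A : Matrix (Fin n) (Fin n) ℂ) : Matrix (Fin n) (Fin n) ℂ :=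
  (1 / 2 : ℝ) • (A + Aᴴ)

/-- The weighted harmonic mean `A !_t B = ((1-t)A⁻¹ + tB⁻¹)⁻¹`. -/
noncomputable def harmMean {n : ℕ} (A B : Matrix (Fin n) (Fin n) ℂ) (t : ℝ) :
    Matrix (Fin n) (Fin n) ℂ :=
  ((1 - t) • A⁻¹ + t • B⁻¹)⁻¹

/-- The numerical range of `A` is contained in the sector
`S_α = {z : ℜz > 0, |ℑz| ≤ tan(α)ℜz}`. -/
def SectorRange {n : ℕ} (α : ℝ) (A : Matrix (Fin n) (Fin n) ℂ) : Prop :=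
  ∀ x : Fin n → ℂ, x ≠ 0 →
    0 < (star x ⬝ᵥ (A *ᵥ x)).re ∧
      |(star x ⬝ᵥ (A *ᵥ x)).im| ≤ Real.tan α * (star x ⬝ᵥ (A *ᵥ x)).re

open scoped MatrixOrder in
noncomputable def Matrix.PosSemidef.sqrt {n : ℕ} {A : Matrix (Fin n) (Fin n) ℂ}
    (_hA : A.PosSemidef) : Matrix (Fin n) (Fin n) ℂ :=
  CFC.sqrt A

open scoped MatrixOrder in
lemma Matrix.PosSemidef.sqrt_mul_self {n : ℕ} {A : Matrix (Fin n) (Fin n) ℂ}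
    (hA : A.PosSemidef) : hA.sqrt * hA.sqrt = A :=
  CFC.sqrt_mul_sqrt_self A (Matrix.nonneg_iff_posSemidef.mpr hA)

open scoped MatrixOrder in
lemma Matrix.PosSemidef.posSemidef_sqrt {n : ℕ} {A : Matrix (Fin n) (Fin n) ℂ}
    (hA : A.PosSemidef) : hA.sqrt.PosSemidef :=
  Matrix.nonneg_iff_posSemidef.mp (CFC.sqrt_nonneg A)

namespace Stmt7
variable {n : ℕ}

lemma real_smul_eq (r : ℝ) (M : Matrix (Fin n) (Fin n) ℂ) : r • M = (r : ℂ) • M := by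
  ext i j; simp [Complex.real_smul]

/-- imaginary part -/
noncomputable def imMat (A : Matrix (Fin n) (Fin n) ℂ) : Matrix (Fin n) (Fin n) ℂ :=
  (-(Complex.I)/2) • (A - Aᴴ)

lemma qf_conjTranspose (A : Matrix (Fin n) (Fin n) ℂ) (x : Fin n → ℂ) :
    star x ⬝ᵥ (Aᴴ *ᵥ x) = star (star x ⬝ᵥ (A *ᵥ x)) := by
  rw [dotProduct_mulVec, ← star_mulVec, star_dotProduct]

lemma reMat_hermitian (A : Matrix (Fin n) (Fin n) ℂ) : (reMat A).IsHermitian := by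
  unfold reMat
  rw [real_smul_eq]
  unfold Matrix.IsHermitian
  rw [conjTranspose_smul, conjTranspose_add, conjTranspose_conjTranspose]
  simp [add_comm]

lemma imMat_hermitian (A : Matrix (Fin n) (Fin n) ℂ) : (imMat A).IsHermitian := by
  unfold imMat Matrix.IsHermitian
  rw [conjTranspose_smul, conjTranspose_sub, conjTranspose_conjTranspose]
  rw [show star (-(Complex.I)/2) = (Complex.I/2) by simp]
  module

lemma reMat_add_I_smul_imMat (A : Matrix (Fin n) (Fin n) ℂ) :
    reMat A + Complex.I • imMat A = A := by
  ext i j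
  simp [reMat, imMat, Complex.real_smul, Matrix.add_apply, Matrix.smul_apply, Matrix.sub_apply]
  linear_combination (-(A i j)/2 + (starRingEnd ℂ) (A j i)/2) * Complex.I_sq

lemma qf_reMat (A : Matrix (Fin n) (Fin n) ℂ) (x : Fin n → ℂ) :
    star x ⬝ᵥ (reMat A *ᵥ x) = ((star x ⬝ᵥ (A *ᵥ x)).re : ℂ) := by
  unfold reMat
  rw [real_smul_eq, smul_mulVec, dotProduct_smul, add_mulVec, dotProduct_add,
    qf_conjTranspose]
  set z := star x ⬝ᵥ (A *ᵥ x)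
  rw [Complex.ext_iff]
  simp [Complex.add_re, Complex.add_im]
  ring

lemma qf_imMat (A : Matrix (Fin n) (Fin n) ℂ) (x : Fin n → ℂ) :
    star x ⬝ᵥ (imMat A *ᵥ x) = ((star x ⬝ᵥ (A *ᵥ x)).im : ℂ) := by
  unfold imMat
  rw [smul_mulVec, dotProduct_smul, sub_mulVec, dotProduct_sub, qf_conjTranspose]
  set z := star x ⬝ᵥ (A *ᵥ x)
  rw [Complex.ext_iff]
  simp [Complex.sub_re, Complex.sub_im, Complex.div_re, Complex.div_im]
  ring


lemma psd_smul {M : Matrix (Fin n) (Fin n) ℂ} (hM : M.PosSemidef) {c : ℝ} (hc : 0 ≤ c) :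
    (c • M).PosSemidef := by
  rw [real_smul_eq]
  refine Matrix.PosSemidef.of_dotProduct_mulVec_nonneg ?_ ?_
  · unfold Matrix.IsHermitian
    rw [conjTranspose_smul, hM.1]
    congr 1
    simp [Complex.ext_iff]
  · intro x
    rw [smul_mulVec, dotProduct_smul]
    have := hM.dotProduct_mulVec_nonneg x
    rw [smul_eq_mul]
    exact mul_nonneg (by exact_mod_cast Complex.zero_le_real.mpr hc) this

lemma pd_smul {M : Matrix (Fin n) (Fin n) ℂ} (hM : M.PosDef) {c : ℝ} (hc : 0 < c) :
    (c • M).PosDef := by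
  rw [real_smul_eq]
  refine Matrix.PosDef.of_dotProduct_mulVec_pos ?_ (fun x hx => ?_)
  · unfold Matrix.IsHermitian
    rw [conjTranspose_smul, hM.1]
    congr 1
    simp [Complex.ext_iff]
  · rw [smul_mulVec, dotProduct_smul, smul_eq_mul]
    exact mul_pos (by exact_mod_cast Complex.zero_lt_real.mpr hc) (hM.dotProduct_mulVec_pos hx)

lemma psd_sub_congr {M N X : Matrix (Fin n) (Fin n) ℂ} (h : (N - M).PosSemidef) :
    (X * N * Xᴴ - X * M * Xᴴ).PosSemidef := by
  have := h.mul_mul_conjTranspose_same X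
  rwa [Matrix.mul_sub, Matrix.sub_mul] at this

/-- positive combination of PD matrices -/
lemma pd_combo {M N : Matrix (Fin n) (Fin n) ℂ} (hM : M.PosDef) (hN : N.PosDef)
    {a b : ℝ} (ha : 0 ≤ a) (hb : 0 ≤ b) (hab : a + b = 1) :
    (a • M + b • N).PosDef := by
  rcases ha.lt_or_eq with ha' | ha'
  · exact (pd_smul hM ha').add_posSemidef (psd_smul hN.posSemidef hb)
  · have hb' : b = 1 := by linarith
    simp [← ha', hb']
    exact hN

/-- Sectorial matrices have positive-definite real part. -/
lemma sect_reMat_pd {α : ℝ} {A : Matrix (Fin n) (Fin n) ℂ} (hA : SectorRange α A) :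
    (reMat A).PosDef := by
  refine Matrix.PosDef.of_dotProduct_mulVec_pos (reMat_hermitian A) (fun x hx => ?_)
  rw [qf_reMat]
  exact_mod_cast Complex.zero_lt_real.mpr (hA x hx).1

/-- Sectorial matrices are invertible. -/
lemma sect_det_ne {α : ℝ} {A : Matrix (Fin n) (Fin n) ℂ} (hA : SectorRange α A) :
    A.det ≠ 0 := by
  intro h
  obtain ⟨v, hv, hv0⟩ := (Matrix.exists_mulVec_eq_zero_iff).mpr h
  have := (hA v hv).1
  rw [hv0] at this
  simp at this

lemma sect_isUnit {α : ℝ} {A : Matrix (Fin n) (Fin n) ℂ} (hA : SectorRange α A) :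
    IsUnit A.det := isUnit_iff_ne_zero.mpr (sect_det_ne hA)

lemma sect_inv {α : ℝ} {A : Matrix (Fin n) (Fin n) ℂ} (hA : SectorRange α A) :
    SectorRange α A⁻¹ := by
  intro x hx
  have hinv := Matrix.nonsing_inv_mul A (sect_isUnit hA)
  set y := A⁻¹ *ᵥ x with hy
  have hxy : x = A *ᵥ y := by
    rw [hy, Matrix.mulVec_mulVec, Matrix.mul_nonsing_inv A (sect_isUnit hA), Matrix.one_mulVec]
  have hyne : y ≠ 0 := by
    intro h0
    rw [hxy, h0] at hx
    simp at hx
  have key : star x ⬝ᵥ (A⁻¹ *ᵥ x) = star (star y ⬝ᵥ (A *ᵥ y)) := by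
    rw [← hy, hxy, star_mulVec, ← dotProduct_mulVec, qf_conjTranspose]
  obtain ⟨h1, h2⟩ := hA y hyne
  rw [key]
  simp only [Complex.star_def, Complex.conj_re, Complex.conj_im, abs_neg]
  exact ⟨h1, h2⟩

lemma sect_combo {α : ℝ} {A B : Matrix (Fin n) (Fin n) ℂ} (hA : SectorRange α A)
    (hB : SectorRange α B) {a b : ℝ} (ha : 0 ≤ a) (hb : 0 ≤ b) (hab : a + b = 1)
    (hα : 0 ≤ Real.tan α) :
    SectorRange α (a • A + b • B) := by
  intro x hx
  obtain ⟨hA1, hA2⟩ := hA x hx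
  obtain ⟨hB1, hB2⟩ := hB x hx
  have key : star x ⬝ᵥ ((a • A + b • B) *ᵥ x)
      = (a : ℂ) * (star x ⬝ᵥ (A *ᵥ x)) + (b : ℂ) * (star x ⬝ᵥ (B *ᵥ x)) := by
    rw [Matrix.add_mulVec, dotProduct_add, real_smul_eq, real_smul_eq,
      smul_mulVec, smul_mulVec, dotProduct_smul, dotProduct_smul]
    simp [smul_eq_mul]
  rw [key]
  set z := star x ⬝ᵥ (A *ᵥ x)
  set w := star x ⬝ᵥ (B *ᵥ x)
  have hre : ((a : ℂ) * z + (b : ℂ) * w).re = a * z.re + b * w.re := by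
    simp [Complex.add_re, Complex.mul_re]
  have him : ((a : ℂ) * z + (b : ℂ) * w).im = a * z.im + b * w.im := by
    simp [Complex.add_im, Complex.mul_im]
  rw [hre, him]
  constructor
  · rcases ha.lt_or_eq with ha' | ha'
    · have : 0 ≤ b * w.re := mul_nonneg hb hB1.le
      nlinarith
    · have hb' : b = 1 := by linarith
      rw [← ha', hb']; simpa using hB1
  · calc |a * z.im + b * w.im| ≤ a * |z.im| + b * |w.im| := by
          calc |a * z.im + b * w.im| ≤ |a * z.im| + |b * w.im| := abs_add_le _ _
          _ = a * |z.im| + b * |w.im| := by rw [abs_mul, abs_mul, abs_of_nonneg ha, abs_of_nonneg hb]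
        _ ≤ a * (Real.tan α * z.re) + b * (Real.tan α * w.re) := by
          have := mul_le_mul_of_nonneg_left hA2 ha
          have := mul_le_mul_of_nonneg_left hB2 hb
          linarith
        _ = Real.tan α * (a * z.re + b * w.re) := by ring


lemma conj_qf (M X : Matrix (Fin n) (Fin n) ℂ) (x : Fin n → ℂ) :
    star x ⬝ᵥ ((X * M * Xᴴ) *ᵥ x) = star (Xᴴ *ᵥ x) ⬝ᵥ (M *ᵥ (Xᴴ *ᵥ x)) := by
  rw [star_mulVec, conjTranspose_conjTranspose, ← Matrix.mulVec_mulVec, ← Matrix.mulVec_mulVec,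
    dotProduct_mulVec (star x) X]

lemma pd_conj {M X : Matrix (Fin n) (Fin n) ℂ} (hM : M.PosDef) (hX : IsUnit X.det) :
    (X * M * Xᴴ).PosDef := by
  refine Matrix.PosDef.of_dotProduct_mulVec_pos ?_ (fun x hx => ?_)
  · unfold Matrix.IsHermitian
    rw [conjTranspose_mul, conjTranspose_mul, conjTranspose_conjTranspose, hM.1, mul_assoc]
  · rw [conj_qf]
    apply hM.dotProduct_mulVec_pos
    intro h0
    have : Xᴴ⁻¹ *ᵥ (Xᴴ *ᵥ x) = 0 := by rw [h0]; simp
    rw [Matrix.mulVec_mulVec, Matrix.nonsing_inv_mul _ (by rw [Matrix.det_conjTranspose]; exact hX.star), Matrix.one_mulVec] at this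
    exact hx this

/-- sqrt of a PosDef matrix is invertible -/
lemma pd_sqrt_isUnit {H : Matrix (Fin n) (Fin n) ℂ} (hH : H.PosDef) :
    IsUnit hH.posSemidef.sqrt.det := by
  have h := hH.posSemidef.sqrt_mul_self
  have : hH.posSemidef.sqrt.det * hH.posSemidef.sqrt.det = H.det := by
    rw [← Matrix.det_mul, h]
  apply isUnit_iff_ne_zero.mpr
  intro h0
  rw [h0, mul_zero] at this
  exact (ne_of_gt hH.det_pos) this.symm

lemma pd_sqrt_inv_herm {H : Matrix (Fin n) (Fin n) ℂ} (hH : H.PosDef) :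
    (hH.posSemidef.sqrt⁻¹).IsHermitian := by
  unfold Matrix.IsHermitian
  rw [Matrix.conjTranspose_nonsing_inv, hH.posSemidef.posSemidef_sqrt.isHermitian]

/-- `S⁻¹ * H * S⁻¹ = 1` for `S = sqrt H`. -/
lemma pd_sqrt_inv_conj {H : Matrix (Fin n) (Fin n) ℂ} (hH : H.PosDef) :
    hH.posSemidef.sqrt⁻¹ * H * hH.posSemidef.sqrt⁻¹ = 1 := by
  set S := hH.posSemidef.sqrt
  have hu := pd_sqrt_isUnit hH
  rw [← hH.posSemidef.sqrt_mul_self, show S⁻¹ * (S * S) * S⁻¹ = (S⁻¹ * S) * (S * S⁻¹) by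
    simp only [Matrix.mul_assoc], Matrix.nonsing_inv_mul _ hu, Matrix.mul_nonsing_inv _ hu, one_mul]

lemma pd_sqrt_inv_inv {H : Matrix (Fin n) (Fin n) ℂ} (hH : H.PosDef) :
    hH.posSemidef.sqrt⁻¹ * hH.posSemidef.sqrt⁻¹ = H⁻¹ := by
  rw [← Matrix.mul_inv_rev, hH.posSemidef.sqrt_mul_self]

/-- If `R` is PD and `R ≤ 1` then `1 ≤ R⁻¹`. -/
lemma inv_sub_one_psd {R : Matrix (Fin n) (Fin n) ℂ} (hR : R.PosDef)
    (h : ((1 : Matrix (Fin n) (Fin n) ℂ) - R).PosSemidef) : (R⁻¹ - 1).PosSemidef := by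
  set S := hR.posSemidef.sqrt with hSdef
  have hSh := pd_sqrt_inv_herm hR
  have key := psd_sub_congr (X := S⁻¹) h
  rw [hSh] at key
  rwa [Matrix.mul_one, pd_sqrt_inv_inv hR, pd_sqrt_inv_conj hR] at key

/-- Inverse is antitone on PD matrices. -/
lemma inv_antitone {P Q : Matrix (Fin n) (Fin n) ℂ} (hP : P.PosDef) (hQ : Q.PosDef)
    (h : (Q - P).PosSemidef) : (P⁻¹ - Q⁻¹).PosSemidef := by
  set S := hQ.posSemidef.sqrt with hSdef
  have hSu := pd_sqrt_isUnit hQ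
  have hSiu : IsUnit (S⁻¹).det := Matrix.isUnit_nonsing_inv_det _ hSu
  have hSh := pd_sqrt_inv_herm hQ
  have hR : (S⁻¹ * P * S⁻¹).PosDef := by
    have := pd_conj (X := S⁻¹) hP hSiu
    rwa [hSh] at this
  have h1 : ((1 : Matrix (Fin n) (Fin n) ℂ) - S⁻¹ * P * S⁻¹).PosSemidef := by
    have key := psd_sub_congr (X := S⁻¹) h
    rw [hSh] at key
    rwa [pd_sqrt_inv_conj hQ] at key
  have h2 := inv_sub_one_psd hR h1
  have key := psd_sub_congr (X := S⁻¹) h2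
  rw [hSh] at key
  have hPu : IsUnit P.det := isUnit_iff_ne_zero.mpr (ne_of_gt hP.det_pos)
  have einv : (S⁻¹ * P * S⁻¹)⁻¹ = S * P⁻¹ * S := by
    apply Matrix.inv_eq_right_inv
    simp only [Matrix.mul_assoc]
    rw [Matrix.nonsing_inv_mul_cancel_left _ _ hSu, Matrix.mul_nonsing_inv_cancel_left _ _ hPu,
      Matrix.nonsing_inv_mul _ hSu]
  have e1 : S⁻¹ * (S⁻¹ * P * S⁻¹)⁻¹ * S⁻¹ = P⁻¹ := by
    rw [einv]
    simp only [Matrix.mul_assoc]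
    rw [Matrix.mul_nonsing_inv _ hSu, Matrix.mul_one, Matrix.nonsing_inv_mul_cancel_left _ _ hSu]
  rwa [Matrix.mul_one, pd_sqrt_inv_inv hQ, e1] at key


section DiagApp

variable {C : Matrix (Fin n) (Fin n) ℂ} (hC : C.IsHermitian)

/-- `U * diagonal d * Uᴴ` where `U` diagonalizes `C`. -/
noncomputable def diagApp (d : Fin n → ℂ) : Matrix (Fin n) (Fin n) ℂ :=
  hC.eigenvectorUnitary * diagonal d * (star hC.eigenvectorUnitary : Matrix (Fin n) (Fin n) ℂ)

lemma unitary_mul_star : (hC.eigenvectorUnitary : Matrix (Fin n) (Fin n) ℂ)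
    * (star hC.eigenvectorUnitary : Matrix (Fin n) (Fin n) ℂ) = 1 :=
  Matrix.mem_unitaryGroup_iff.mp hC.eigenvectorUnitary.2

lemma unitary_star_mul : (star hC.eigenvectorUnitary : Matrix (Fin n) (Fin n) ℂ)
    * (hC.eigenvectorUnitary : Matrix (Fin n) (Fin n) ℂ) = 1 :=
  Matrix.mem_unitaryGroup_iff'.mp hC.eigenvectorUnitary.2

lemma diagApp_mul (d₁ d₂ : Fin n → ℂ) :
    diagApp hC d₁ * diagApp hC d₂ = diagApp hC (d₁ * d₂) := by
  unfold diagApp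
  simp only [Matrix.mul_assoc]
  rw [← Matrix.mul_assoc (star hC.eigenvectorUnitary : Matrix (Fin n) (Fin n) ℂ)
      (hC.eigenvectorUnitary : Matrix (Fin n) (Fin n) ℂ), unitary_star_mul, Matrix.one_mul,
    ← Matrix.mul_assoc (diagonal d₁) (diagonal d₂), Matrix.diagonal_mul_diagonal]
  rfl

lemma diagApp_one : diagApp hC (fun _ => 1) = 1 := by
  unfold diagApp
  rw [show (diagonal (fun _ => (1:ℂ)) : Matrix (Fin n) (Fin n) ℂ) = 1 from diagonal_one,
    Matrix.mul_one, unitary_mul_star]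

lemma diagApp_add (d₁ d₂ : Fin n → ℂ) :
    diagApp hC d₁ + diagApp hC d₂ = diagApp hC (d₁ + d₂) := by
  unfold diagApp
  rw [show d₁ + d₂ = fun i => d₁ i + d₂ i from rfl, ← diagonal_add, Matrix.mul_add,
    Matrix.add_mul]

lemma diagApp_sub (d₁ d₂ : Fin n → ℂ) :
    diagApp hC d₁ - diagApp hC d₂ = diagApp hC (d₁ - d₂) := by
  unfold diagApp
  rw [show d₁ - d₂ = fun i => d₁ i - d₂ i from rfl, ← diagonal_sub, Matrix.mul_sub,
    Matrix.sub_mul]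

lemma diagApp_smul (c : ℂ) (d : Fin n → ℂ) :
    c • diagApp hC d = diagApp hC (c • d) := by
  unfold diagApp
  rw [diagonal_smul, Matrix.mul_smul, Matrix.smul_mul]

lemma diagApp_eigs : diagApp hC (fun i => (hC.eigenvalues i : ℂ)) = C := by
  have := hC.spectral_theorem
  rw [Unitary.conjStarAlgAut_apply] at this
  unfold diagApp
  exact this.symm

lemma diagApp_inv {d : Fin n → ℂ} (hd : ∀ i, d i ≠ 0) :
    (diagApp hC d)⁻¹ = diagApp hC (fun i => (d i)⁻¹) := by
  apply Matrix.inv_eq_right_inv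
  rw [diagApp_mul]
  rw [show (d * fun i => (d i)⁻¹) = fun _ => (1:ℂ) from funext fun i => by
    simp [mul_inv_cancel₀ (hd i)]]
  exact diagApp_one hC

lemma diagApp_psd {g : Fin n → ℝ} (hg : ∀ i, 0 ≤ g i) :
    (diagApp hC (fun i => (g i : ℂ))).PosSemidef := by
  apply Matrix.PosSemidef.mul_mul_conjTranspose_same
  exact Matrix.posSemidef_diagonal_iff.mpr fun i => by
    exact_mod_cast Complex.zero_le_real.mpr (hg i)

lemma diagApp_herm (d : Fin n → ℂ) (hd : ∀ i, (d i).im = 0) :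
    (diagApp hC d).IsHermitian := by
  have hd' : star d = d := funext fun i => by
    simp [Complex.ext_iff, Complex.conj_re, Complex.conj_im, hd i]
  unfold diagApp Matrix.IsHermitian
  simp only [conjTranspose_mul, Matrix.star_eq_conjTranspose, conjTranspose_conjTranspose,
    diagonal_conjTranspose, hd']
  simp [Matrix.mul_assoc]

/-- unit-norm of eigenvectors, as a dot product -/
lemma eigenvectorBasis_qf_one (i : Fin n) :
    ((star (hC.eigenvectorBasis i : Fin n → ℂ)) ⬝ᵥ ((hC.eigenvectorBasis i : Fin n → ℂ))).re
      = 1 := by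
  have h := hC.eigenvectorBasis.orthonormal.1 i
  have : (inner ℂ (hC.eigenvectorBasis i) (hC.eigenvectorBasis i) : ℂ)
      = star (hC.eigenvectorBasis i : Fin n → ℂ) ⬝ᵥ (hC.eigenvectorBasis i : Fin n → ℂ) := by
    rw [EuclideanSpace.inner_eq_star_dotProduct]
    exact dotProduct_comm _ _
  rw [← this, inner_self_eq_norm_sq_to_K, h]
  norm_num

/-- A hermitian matrix with quadratic form bounded by `c` has `M² ≤ c²`. -/
lemma herm_sq_le {M : Matrix (Fin n) (Fin n) ℂ} (hM : M.IsHermitian) {c : ℝ} (_hc : 0 ≤ c)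
    (hb : ∀ x : Fin n → ℂ, |(star x ⬝ᵥ (M *ᵥ x)).re| ≤ c * (star x ⬝ᵥ x).re) :
    ((c ^ 2 : ℝ) • (1 : Matrix (Fin n) (Fin n) ℂ) - M * M).PosSemidef := by
  have heig : ∀ i, |hM.eigenvalues i| ≤ c := by
    intro i
    have h1 := hM.eigenvalues_eq i
    have h2 := hb (hM.eigenvectorBasis i)
    rw [eigenvectorBasis_qf_one, mul_one] at h2
    rw [h1]
    exact h2
  have hMM : M * M = diagApp hM (fun i => ((hM.eigenvalues i : ℝ) : ℂ))
      * diagApp hM (fun i => ((hM.eigenvalues i : ℝ) : ℂ)) := by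
    rw [diagApp_eigs]
  have h1 : (c ^ 2 : ℝ) • (1 : Matrix (Fin n) (Fin n) ℂ)
      = diagApp hM (fun _ => ((c ^ 2 : ℝ) : ℂ)) := by
    rw [real_smul_eq, show (fun _ => ((c ^ 2 : ℝ) : ℂ)) = ((c ^ 2 : ℝ) : ℂ)
        • (fun _ => (1 : ℂ)) from funext fun i => by simp, ← diagApp_smul, diagApp_one]
  rw [hMM, h1, diagApp_mul, diagApp_sub]
  rw [show ((fun _ => ((c ^ 2 : ℝ) : ℂ)) - (fun i => ((hM.eigenvalues i : ℝ) : ℂ))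
        * (fun i => ((hM.eigenvalues i : ℝ) : ℂ)))
      = fun i => ((c ^ 2 - hM.eigenvalues i ^ 2 : ℝ) : ℂ) from funext fun i => by
    simp only [Pi.sub_apply, Pi.mul_apply, Pi.pow_apply]
    push_cast; ring]
  apply diagApp_psd
  intro i
  have := heig i
  nlinarith [abs_nonneg (hM.eigenvalues i), sq_abs (hM.eigenvalues i)]

end DiagApp


lemma reMat_inv {A : Matrix (Fin n) (Fin n) ℂ} (hu : IsUnit A.det) :
    reMat A⁻¹ = A⁻¹ * reMat A * (A⁻¹)ᴴ := by
  have huh : IsUnit Aᴴ.det := by rw [Matrix.det_conjTranspose]; exact hu.star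
  unfold reMat
  rw [real_smul_eq, real_smul_eq, Matrix.conjTranspose_nonsing_inv, Matrix.mul_smul,
    Matrix.smul_mul]
  congr 1
  rw [Matrix.mul_add, Matrix.add_mul, Matrix.nonsing_inv_mul _ hu, Matrix.one_mul,
    Matrix.mul_nonsing_inv_cancel_right _ _ huh, add_comm]

lemma expand_conj {H K : Matrix (Fin n) (Fin n) ℂ} (hH : IsUnit H.det) (hHh : H.IsHermitian)
    (hK : K.IsHermitian) :
    (H + Complex.I • K) * H⁻¹ * (H + Complex.I • K)ᴴ = H + K * H⁻¹ * K := by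
  have e1 : (H + Complex.I • K)ᴴ = H - Complex.I • K := by
    rw [conjTranspose_add, conjTranspose_smul, hHh, hK]
    simp [sub_eq_add_neg, ← neg_smul]
  have h2 : (H + Complex.I • K) * H⁻¹ = 1 + Complex.I • (K * H⁻¹) := by
    rw [Matrix.add_mul, Matrix.mul_nonsing_inv _ hH, Matrix.smul_mul]
  rw [e1, h2, Matrix.add_mul, Matrix.one_mul, Matrix.smul_mul, Matrix.mul_sub,
    Matrix.nonsing_inv_mul_cancel_right _ _ hH, Matrix.mul_smul, smul_sub, smul_smul,
    Complex.I_mul_I]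
  module

lemma sect_KHK {α : ℝ} {A : Matrix (Fin n) (Fin n) ℂ} (hA : SectorRange α A)
    (hα : 0 ≤ Real.tan α) :
    ((Real.tan α ^ 2) • reMat A - imMat A * (reMat A)⁻¹ * imMat A).PosSemidef := by
  set H := reMat A with hHdef
  set K := imMat A with hKdef
  have hH : H.PosDef := sect_reMat_pd hA
  have hKh : K.IsHermitian := imMat_hermitian A
  set S := hH.posSemidef.sqrt with hSdef
  have hSu := pd_sqrt_isUnit hH
  have hSh := pd_sqrt_inv_herm hH
  set M := S⁻¹ * K * S⁻¹ with hMdef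
  have hMh : M.IsHermitian := by
    unfold Matrix.IsHermitian
    rw [hMdef, conjTranspose_mul, conjTranspose_mul, hSh, hKh, Matrix.mul_assoc]
  -- quadratic form bound for M
  have hb : ∀ x : Fin n → ℂ, |(star x ⬝ᵥ (M *ᵥ x)).re| ≤ Real.tan α * (star x ⬝ᵥ x).re := by
    intro x
    rcases eq_or_ne x 0 with rfl | hx
    · simp
    have hy : (S⁻¹ᴴ *ᵥ x) ≠ 0 := by
      intro h0
      have : Sᴴ⁻¹ *ᵥ x = 0 := by rw [← Matrix.conjTranspose_nonsing_inv]; exact h0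
      have h2 : Sᴴ *ᵥ (Sᴴ⁻¹ *ᵥ x) = 0 := by rw [this]; simp
      rw [Matrix.mulVec_mulVec, Matrix.mul_nonsing_inv _ (by
        rw [Matrix.det_conjTranspose]; exact hSu.star), Matrix.one_mulVec] at h2
      exact hx h2
    set y := S⁻¹ᴴ *ᵥ x with hydef
    have e1 : star x ⬝ᵥ (M *ᵥ x) = star y ⬝ᵥ (K *ᵥ y) := by
      rw [hMdef, show S⁻¹ * K * S⁻¹ = S⁻¹ * K * (S⁻¹)ᴴ from by rw [hSh], conj_qf]
    have e2 : star x ⬝ᵥ x = star y ⬝ᵥ (H *ᵥ y) := by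
      have e3 : (1 : Matrix (Fin n) (Fin n) ℂ) = S⁻¹ * H * (S⁻¹)ᴴ := by
        rw [hSh]; exact (pd_sqrt_inv_conj hH).symm
      calc star x ⬝ᵥ x = star x ⬝ᵥ ((1 : Matrix (Fin n) (Fin n) ℂ) *ᵥ x) := by
            rw [Matrix.one_mulVec]
        _ = star y ⬝ᵥ (H *ᵥ y) := by rw [e3, conj_qf]
    rw [e1, e2, hKdef, hHdef, qf_imMat, qf_reMat]
    simp only [Complex.ofReal_re]
    exact (hA y hy).2
  have key := herm_sq_le hMh hα hb
  have key2 := key.mul_mul_conjTranspose_same S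
  have hSherm : Sᴴ = S := hH.posSemidef.posSemidef_sqrt.isHermitian
  have e4 : S * ((Real.tan α ^ 2) • (1 : Matrix (Fin n) (Fin n) ℂ) - M * M) * Sᴴ
      = (Real.tan α ^ 2) • H - K * H⁻¹ * K := by
    rw [hSherm, real_smul_eq, real_smul_eq, Matrix.mul_sub, Matrix.sub_mul, Matrix.mul_smul,
      Matrix.smul_mul, Matrix.mul_one, hH.posSemidef.sqrt_mul_self]
    congr 1
    rw [hMdef]
    calc S * (S⁻¹ * K * S⁻¹ * (S⁻¹ * K * S⁻¹)) * S
        = (S * S⁻¹) * K * (S⁻¹ * S⁻¹) * K * (S⁻¹ * S) := by simp only [Matrix.mul_assoc]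
      _ = K * H⁻¹ * K := by
          rw [Matrix.mul_nonsing_inv _ hSu, Matrix.nonsing_inv_mul _ hSu, pd_sqrt_inv_inv hH,
            Matrix.one_mul, Matrix.mul_one]
  rwa [e4] at key2

/-- `ℜ(A⁻¹) ≥ cos²α (ℜA)⁻¹` for sectorial `A`. -/
lemma sect_re_inv_ge {α : ℝ} {A : Matrix (Fin n) (Fin n) ℂ} (hA : SectorRange α A)
    (hα0 : 0 ≤ α) (hα1 : α < Real.pi / 2) :
    (reMat A⁻¹ - (Real.cos α ^ 2) • (reMat A)⁻¹).PosSemidef := by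
  have hcos : 0 < Real.cos α := Real.cos_pos_of_mem_Ioo ⟨by linarith [Real.pi_pos], hα1⟩
  have htan : 0 ≤ Real.tan α := by
    rw [Real.tan_eq_sin_div_cos]
    exact div_nonneg (Real.sin_nonneg_of_nonneg_of_le_pi hα0
      (by linarith [Real.pi_pos])) hcos.le
  set H := reMat A with hHdef
  set K := imMat A with hKdef
  have hH : H.PosDef := sect_reMat_pd hA
  have hHu : IsUnit H.det := isUnit_iff_ne_zero.mpr (ne_of_gt hH.det_pos)
  have hAu := sect_isUnit hA
  have hKHK := sect_KHK hA htan
  have hAHA : A * H⁻¹ * Aᴴ = H + K * H⁻¹ * K := by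
    conv_lhs => rw [← reMat_add_I_smul_imMat A]
    exact expand_conj hHu hH.isHermitian (imMat_hermitian A)
  have scalar : Real.cos α ^ 2 * Real.tan α ^ 2 = 1 - Real.cos α ^ 2 := by
    rw [Real.tan_eq_sin_div_cos]
    field_simp
    nlinarith [Real.sin_sq_add_cos_sq α]
  have e5 : H - (Real.cos α ^ 2) • (A * H⁻¹ * Aᴴ)
      = (Real.cos α ^ 2) • ((Real.tan α ^ 2) • H - K * H⁻¹ * K) := by
    rw [hAHA, real_smul_eq, real_smul_eq, real_smul_eq, smul_sub, smul_smul,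
      show ((Real.cos α ^ 2 : ℝ) : ℂ) * ((Real.tan α ^ 2 : ℝ) : ℂ)
        = 1 - ((Real.cos α ^ 2 : ℝ) : ℂ) from by
        rw [← Complex.ofReal_mul, scalar]; push_cast; ring]
    module
  have hpsd : (H - (Real.cos α ^ 2) • (A * H⁻¹ * Aᴴ)).PosSemidef := by
    rw [e5]; exact psd_smul hKHK (sq_nonneg _)
  have key := hpsd.mul_mul_conjTranspose_same A⁻¹
  have e6 : A⁻¹ * (H - (Real.cos α ^ 2) • (A * H⁻¹ * Aᴴ)) * (A⁻¹)ᴴ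
      = reMat A⁻¹ - (Real.cos α ^ 2) • H⁻¹ := by
    rw [Matrix.mul_sub, Matrix.sub_mul, ← reMat_inv hAu, real_smul_eq, real_smul_eq,
      Matrix.mul_smul, Matrix.smul_mul]
    congr 2
    rw [Matrix.conjTranspose_nonsing_inv]
    calc A⁻¹ * (A * H⁻¹ * Aᴴ) * Aᴴ⁻¹
        = (A⁻¹ * A) * H⁻¹ * (Aᴴ * Aᴴ⁻¹) := by simp only [Matrix.mul_assoc]
      _ = H⁻¹ := by
          rw [Matrix.nonsing_inv_mul _ hAu, Matrix.mul_nonsing_inv _ (by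
            rw [Matrix.det_conjTranspose]; exact hAu.star), Matrix.one_mul, Matrix.mul_one]
  rwa [e6] at key

/-- `ℜ(T⁻¹) ≤ (ℜT)⁻¹` for sectorial `T`. -/
lemma sect_re_inv_le {α : ℝ} {T : Matrix (Fin n) (Fin n) ℂ} (hT : SectorRange α T) :
    ((reMat T)⁻¹ - reMat T⁻¹).PosSemidef := by
  set H := reMat T with hHdef
  set K := imMat T with hKdef
  have hH : H.PosDef := sect_reMat_pd hT
  have hHu : IsUnit H.det := isUnit_iff_ne_zero.mpr (ne_of_gt hH.det_pos)
  have hTu := sect_isUnit hT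
  have hTHT : T * H⁻¹ * Tᴴ = H + K * H⁻¹ * K := by
    conv_lhs => rw [← reMat_add_I_smul_imMat T]
    exact expand_conj hHu hH.isHermitian (imMat_hermitian T)
  have hKHK : (K * H⁻¹ * K).PosSemidef := by
    have := hH.inv.posSemidef.mul_mul_conjTranspose_same K
    rwa [(imMat_hermitian T)] at this
  have hpsd : (T * H⁻¹ * Tᴴ - H).PosSemidef := by
    rw [hTHT]; simpa using hKHK
  have key := hpsd.mul_mul_conjTranspose_same T⁻¹
  have e1 : T⁻¹ * (T * H⁻¹ * Tᴴ - H) * (T⁻¹)ᴴ = (reMat T)⁻¹ - reMat T⁻¹ := by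
    rw [Matrix.mul_sub, Matrix.sub_mul, ← reMat_inv hTu]
    congr 1
    rw [Matrix.conjTranspose_nonsing_inv]
    calc T⁻¹ * (T * H⁻¹ * Tᴴ) * Tᴴ⁻¹
        = (T⁻¹ * T) * H⁻¹ * (Tᴴ * Tᴴ⁻¹) := by simp only [Matrix.mul_assoc]
      _ = H⁻¹ := by
          rw [Matrix.nonsing_inv_mul _ hTu, Matrix.mul_nonsing_inv _ (by
            rw [Matrix.det_conjTranspose]; exact hTu.star), Matrix.one_mul, Matrix.mul_one]
  rwa [e1] at key


lemma scalar_ineq {t r x : ℝ} (ht0 : 0 ≤ t) (ht1 : t ≤ 1) (hrt : r ≤ t) (hrt' : r ≤ 1 - t)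
    (hr0 : 0 ≤ r) (hx : 0 < x) :
    0 ≤ (1 - t) + t * x - 2 * r * ((1/2) * (1 + x) - ((1 - 1/2) + (1/2) * x⁻¹)⁻¹)
      - ((1 - t) + t * x⁻¹)⁻¹ := by
  have hu : 0 < (1 - t) * x + t := by
    rcases ht1.lt_or_eq with h | h
    · have : 0 < (1 - t) * x := mul_pos (by linarith) hx
      linarith
    · rw [← h]; norm_num; linarith
  have hv : 0 < 1 + x := by linarith
  have e1 : ((1 - t) + t * x⁻¹)⁻¹ = x / ((1 - t) * x + t) := by
    rw [show (1 - t) + t * x⁻¹ = ((1 - t) * x + t) / x from by field_simp, inv_div]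
  have e2 : ((1 - 1/2 : ℝ) + (1/2) * x⁻¹)⁻¹ = 2 * x / (1 + x) := by
    rw [show (1 - 1/2 : ℝ) + (1/2) * x⁻¹ = (1 + x) / (2 * x) from by field_simp; ring, inv_div]
  rw [e1, e2]
  have key : 0 ≤ t * (1 - t) * (1 + x) - r * ((1 - t) * x + t) := by
    have h1 : r * ((1-t) * x) ≤ t * ((1-t) * x) :=
      mul_le_mul_of_nonneg_right hrt (mul_nonneg (by linarith) hx.le)
    have h2 : r * t ≤ (1 - t) * t := mul_le_mul_of_nonneg_right hrt' ht0
    nlinarith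
  have main : (1 - t) + t * x - 2 * r * ((1/2) * (1 + x) - 2 * x / (1 + x))
      - x / ((1 - t) * x + t)
      = (t * (1 - t) * (1 + x) - r * ((1 - t) * x + t)) * (1 - x)^2
        / (((1 - t) * x + t) * (1 + x)) := by
    field_simp
    ring
  rw [main]
  exact div_nonneg (mul_nonneg key (sq_nonneg _)) (mul_pos hu hv).le

set_option maxHeartbeats 1000000 in
/-- Step II: refined AM-HM inequality for positive definite matrices. -/
lemma stepII {H K : Matrix (Fin n) (Fin n) ℂ} (hH : H.PosDef) (hK : K.PosDef) {t r : ℝ}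
    (ht0 : 0 ≤ t) (ht1 : t ≤ 1) (hrt : r ≤ t) (hrt' : r ≤ 1 - t) (hr0 : 0 ≤ r) :
    ((1 - t) • H + t • K - (2 * r) • ((1 / 2 : ℝ) • (H + K) - harmMean H K (1/2))
      - harmMean H K t).PosSemidef := by
  have hKu : IsUnit K.det := isUnit_iff_ne_zero.mpr (ne_of_gt hK.det_pos)
  set S := hH.posSemidef.sqrt with hSdef
  have hSu := pd_sqrt_isUnit hH
  have hSiu : IsUnit (S⁻¹).det := Matrix.isUnit_nonsing_inv_det _ hSu
  have hSh : (S⁻¹)ᴴ = S⁻¹ := pd_sqrt_inv_herm hH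
  have hSherm : Sᴴ = S := hH.posSemidef.posSemidef_sqrt.isHermitian
  set C := S⁻¹ * K * S⁻¹ with hCdef
  have hC : C.PosDef := by
    have := pd_conj (X := S⁻¹) hK hSiu
    rwa [hSh] at this
  have hCh : C.IsHermitian := hC.1
  set lam := hCh.eigenvalues with hlam
  have hlp : ∀ i, 0 < lam i := fun i => hC.eigenvalues_pos i
  have hCu : IsUnit C.det := isUnit_iff_ne_zero.mpr (ne_of_gt hC.det_pos)
  -- basic conjugation identities
  have hE1 : S⁻¹ * H * S⁻¹ = 1 := pd_sqrt_inv_conj hH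
  have hSHS : S * H⁻¹ * S = 1 := by
    rw [← pd_sqrt_inv_inv hH]
    simp only [Matrix.mul_assoc]
    rw [Matrix.nonsing_inv_mul _ hSu, Matrix.mul_one, Matrix.mul_nonsing_inv _ hSu]
  have hCinv : C⁻¹ = S * K⁻¹ * S := by
    rw [hCdef]
    apply Matrix.inv_eq_right_inv
    simp only [Matrix.mul_assoc]
    rw [Matrix.nonsing_inv_mul_cancel_left _ _ hSu, Matrix.mul_nonsing_inv_cancel_left _ _ hKu,
      Matrix.nonsing_inv_mul _ hSu]
  have hCinvDiag : C⁻¹ = diagApp hCh (fun i => (((lam i)⁻¹ : ℝ) : ℂ)) := by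
    conv_lhs => rw [show C = diagApp hCh (fun i => ((lam i : ℝ) : ℂ)) from (diagApp_eigs hCh).symm]
    rw [diagApp_inv hCh (fun i => by
        simp only [ne_eq, Complex.ofReal_eq_zero]
        exact ne_of_gt (hlp i))]
    exact congrArg (diagApp hCh) (funext fun i => (Complex.ofReal_inv _).symm)
  -- conjugation of the harmonic mean
  have hHarm : ∀ τ : ℝ, 0 ≤ τ → τ ≤ 1 → S⁻¹ * harmMean H K τ * S⁻¹
      = diagApp hCh (fun i => ((((1 - τ) + τ * (lam i)⁻¹)⁻¹ : ℝ) : ℂ)) := by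
    intro τ hτ0 hτ1
    have hpos : ∀ i, 0 < (1 - τ) + τ * (lam i)⁻¹ := by
      intro i
      rcases hτ1.lt_or_eq with h | h
      · have : 0 ≤ τ * (lam i)⁻¹ := mul_nonneg hτ0 (inv_pos.mpr (hlp i)).le
        linarith
      · rw [h]
        simpa using inv_pos.mpr (hlp i)
    have hSNS : S * ((1 - τ) • H⁻¹ + τ • K⁻¹) * S
        = diagApp hCh (fun i => (((1 - τ) + τ * (lam i)⁻¹ : ℝ) : ℂ)) := by
      rw [Matrix.mul_add, Matrix.add_mul, Matrix.mul_smul, Matrix.smul_mul, Matrix.mul_smul,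
        Matrix.smul_mul, hSHS, hCinv.symm, hCinvDiag]
      rw [show (1 : Matrix (Fin n) (Fin n) ℂ) = diagApp hCh (fun _ => 1) from
        (diagApp_one hCh).symm]
      rw [real_smul_eq, real_smul_eq, diagApp_smul, diagApp_smul, diagApp_add]
      refine congrArg (diagApp hCh) (funext fun i => ?_)
      simp only [Pi.add_apply, Pi.smul_apply, smul_eq_mul]
      push_cast
      ring
    unfold harmMean
    calc S⁻¹ * ((1 - τ) • H⁻¹ + τ • K⁻¹)⁻¹ * S⁻¹
        = (S * ((1 - τ) • H⁻¹ + τ • K⁻¹) * S)⁻¹ := by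
          rw [Matrix.mul_inv_rev, Matrix.mul_inv_rev]
          simp only [Matrix.mul_assoc]
      _ = (diagApp hCh (fun i => (((1 - τ) + τ * (lam i)⁻¹ : ℝ) : ℂ)))⁻¹ := by rw [hSNS]
      _ = diagApp hCh (fun i => ((((1 - τ) + τ * (lam i)⁻¹)⁻¹ : ℝ) : ℂ)) := by
          rw [diagApp_inv hCh (fun i => by
            simp only [ne_eq, Complex.ofReal_eq_zero]
            exact ne_of_gt (hpos i))]
          exact congrArg (diagApp hCh) (funext fun i => (Complex.ofReal_inv _).symm)
  -- conjugate the whole expression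
  set X := (1 - t) • H + t • K - (2 * r) • ((1 / 2 : ℝ) • (H + K) - harmMean H K (1/2))
      - harmMean H K t with hXdef
  set g := fun i => ((1 - t) + t * lam i - 2 * r * ((1/2) * (1 + lam i)
      - ((1 - 1/2) + (1/2) * (lam i)⁻¹)⁻¹) - ((1 - t) + t * (lam i)⁻¹)⁻¹ : ℝ) with hgdef
  have hXconj : S⁻¹ * X * S⁻¹ = diagApp hCh (fun i => ((g i : ℝ) : ℂ)) := by
    rw [hXdef]
    simp only [Matrix.mul_sub, Matrix.sub_mul, Matrix.mul_add, Matrix.add_mul,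
      Matrix.mul_smul, Matrix.smul_mul]
    rw [hE1, hHarm t ht0 ht1, hHarm (1/2) (by norm_num) (by norm_num)]
    rw [show S⁻¹ * K * S⁻¹ = diagApp hCh (fun i => ((lam i : ℝ) : ℂ)) from by
      rw [← hCdef]; exact (diagApp_eigs hCh).symm]
    rw [show (1 : Matrix (Fin n) (Fin n) ℂ) = diagApp hCh (fun _ => 1) from
      (diagApp_one hCh).symm]
    simp only [real_smul_eq, diagApp_smul, diagApp_add, diagApp_sub]
    refine congrArg (diagApp hCh) (funext fun i => ?_)
    simp only [Pi.add_apply, Pi.sub_apply, Pi.neg_apply, Pi.smul_apply, smul_eq_mul, hgdef]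
    push_cast
    ring
  have gnn : ∀ i, 0 ≤ g i := by
    intro i
    exact scalar_ineq ht0 ht1 hrt hrt' hr0 (hlp i)
  have hpsd := (diagApp_psd hCh gnn).mul_mul_conjTranspose_same S
  rw [hSherm, ← hXconj] at hpsd
  have cc : S * (S⁻¹ * X * S⁻¹) * S = X := by
    simp only [Matrix.mul_assoc]
    rw [Matrix.nonsing_inv_mul _ hSu, Matrix.mul_one, Matrix.mul_nonsing_inv_cancel_left _ _ hSu]
  rwa [cc] at hpsd


lemma reMat_add (X Y : Matrix (Fin n) (Fin n) ℂ) : reMat (X + Y) = reMat X + reMat Y := by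
  unfold reMat
  rw [conjTranspose_add]
  module

lemma reMat_smul (r : ℝ) (X : Matrix (Fin n) (Fin n) ℂ) : reMat (r • X) = r • reMat X := by
  ext i j
  simp [reMat, Matrix.conjTranspose_apply, Complex.real_smul, Matrix.add_apply,
    Matrix.smul_apply, _root_.map_mul, Complex.conj_ofReal]
  ring

lemma smul_inv_eq {c : ℝ} (hc : c ≠ 0) {N : Matrix (Fin n) (Fin n) ℂ} (hN : IsUnit N.det) :
    (c • N)⁻¹ = (c⁻¹ : ℝ) • N⁻¹ := by
  apply Matrix.inv_eq_right_inv
  rw [real_smul_eq, real_smul_eq, Matrix.smul_mul, Matrix.mul_smul, smul_smul,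
    Matrix.mul_nonsing_inv _ hN, ← Complex.ofReal_mul, mul_inv_cancel₀ hc]
  simp

/-- Step I : `ℜ(A !_t B) ≤ sec²α ((ℜA) !_t (ℜB))`. -/
lemma stepI {α : ℝ} {A B : Matrix (Fin n) (Fin n) ℂ} (hA : SectorRange α A)
    (hB : SectorRange α B) (hα0 : 0 ≤ α) (hα1 : α < Real.pi / 2) {t : ℝ}
    (ht0 : 0 ≤ t) (ht1 : t ≤ 1) :
    ((1 / Real.cos α ^ 2) • harmMean (reMat A) (reMat B) t
      - reMat (harmMean A B t)).PosSemidef := by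
  have hcos : 0 < Real.cos α := Real.cos_pos_of_mem_Ioo ⟨by linarith [Real.pi_pos], hα1⟩
  have hc2 : 0 < Real.cos α ^ 2 := by positivity
  have htan : 0 ≤ Real.tan α := by
    rw [Real.tan_eq_sin_div_cos]
    exact div_nonneg (Real.sin_nonneg_of_nonneg_of_le_pi hα0 (by linarith [Real.pi_pos])) hcos.le
  have hAi := sect_inv hA
  have hBi := sect_inv hB
  set T := (1 - t) • A⁻¹ + t • B⁻¹ with hTdef
  have hT : SectorRange α T := sect_combo hAi hBi (by linarith) ht0 (by ring) htan
  have h1a := sect_re_inv_le hT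
  have hHA : (reMat A).PosDef := sect_reMat_pd hA
  have hHB : (reMat B).PosDef := sect_reMat_pd hB
  set N := (1 - t) • (reMat A)⁻¹ + t • (reMat B)⁻¹ with hNdef
  have hN : N.PosDef := pd_combo hHA.inv hHB.inv (by linarith) ht0 (by ring)
  have hNu : IsUnit N.det := isUnit_iff_ne_zero.mpr (ne_of_gt hN.det_pos)
  have hreT : reMat T = (1 - t) • reMat A⁻¹ + t • reMat B⁻¹ := by
    rw [hTdef, reMat_add, reMat_smul, reMat_smul]
  have hgeA := sect_re_inv_ge hA hα0 hα1
  have hgeB := sect_re_inv_ge hB hα0 hα1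
  have psd1 : (reMat T - (Real.cos α ^ 2) • N).PosSemidef := by
    have hsum := (psd_smul hgeA (by linarith : (0:ℝ) ≤ 1 - t)).add (psd_smul hgeB ht0)
    have e : (1 - t) • (reMat A⁻¹ - (Real.cos α ^ 2) • (reMat A)⁻¹)
        + t • (reMat B⁻¹ - (Real.cos α ^ 2) • (reMat B)⁻¹)
        = reMat T - (Real.cos α ^ 2) • N := by
      rw [hreT, hNdef]
      module
    rwa [e] at hsum
  have hcN : ((Real.cos α ^ 2) • N).PosDef := pd_smul hN hc2
  have hreTpd : (reMat T).PosDef := sect_reMat_pd hT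
  have h1b := inv_antitone hcN hreTpd psd1
  have einv : ((Real.cos α ^ 2) • N)⁻¹ = (1 / Real.cos α ^ 2) • N⁻¹ := by
    rw [smul_inv_eq (ne_of_gt hc2) hNu, one_div]
  rw [einv] at h1b
  have hfinal := h1b.add h1a
  rw [sub_add_sub_cancel] at hfinal
  have hh1 : harmMean (reMat A) (reMat B) t = N⁻¹ := rfl
  have hh2 : harmMean A B t = T⁻¹ := rfl
  rw [hh1, hh2]
  exact hfinal

end Stmt7

open Stmt7

/-- For `0 ≤ α < π/2` and `A, B` with numerical ranges in `S_α`,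
`t ∈ [0,1]` and `r = min {t, 1-t}`, in the Loewner order:
`ℜ(A !_t B) ≤ sec²(α)(ℜ((1-t)A + tB) - 2r(ℜ((A+B)/2) - (ℜA) ! (ℜB)))`. -/
theorem stmt7 (n : ℕ) (α : ℝ) (hα0 : 0 ≤ α) (hα1 : α < Real.pi / 2)
    (A B : Matrix (Fin n) (Fin n) ℂ) (hA : SectorRange α A) (hB : SectorRange α B)
    (t : ℝ) (ht : t ∈ Set.Icc (0 : ℝ) 1) (r : ℝ) (hr : r = min t (1 - t)) :
    ((1 / Real.cos α ^ 2) •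
        (reMat ((1 - t) • A + t • B) -
          (2 * r) • (reMat ((1 / 2 : ℝ) • (A + B)) - harmMean (reMat A) (reMat B) (1 / 2))) -
      reMat (harmMean A B t)).PosSemidef := by
  obtain ⟨ht0, ht1⟩ := ht
  have hrt : r ≤ t := hr ▸ min_le_left _ _
  have hrt' : r ≤ 1 - t := hr ▸ min_le_right _ _
  have hr0 : 0 ≤ r := hr ▸ le_min ht0 (by linarith)
  have hcos : 0 < Real.cos α := Real.cos_pos_of_mem_Ioo ⟨by linarith [Real.pi_pos], hα1⟩
  have hc2 : 0 ≤ 1 / Real.cos α ^ 2 := by positivity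
  have hHA : (reMat A).PosDef := sect_reMat_pd hA
  have hHB : (reMat B).PosDef := sect_reMat_pd hB
  have h2 := stepII hHA hHB ht0 ht1 hrt hrt' hr0
  have h1 := stepI hA hB hα0 hα1 ht0 ht1
  have hsum := (psd_smul h2 hc2).add h1
  have hre1 : reMat ((1 - t) • A + t • B) = (1 - t) • reMat A + t • reMat B := by
    rw [reMat_add, reMat_smul, reMat_smul]
  have hre2 : reMat ((1 / 2 : ℝ) • (A + B)) = (1 / 2 : ℝ) • (reMat A + reMat B) := by
    rw [reMat_smul, reMat_add]
  rw [hre1, hre2]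
  have e : (1 / Real.cos α ^ 2) • ((1 - t) • reMat A + t • reMat B
        - (2 * r) • ((1 / 2 : ℝ) • (reMat A + reMat B) - harmMean (reMat A) (reMat B) (1/2))
        - harmMean (reMat A) (reMat B) t)
      + ((1 / Real.cos α ^ 2) • harmMean (reMat A) (reMat B) t - reMat (harmMean A B t))
      = (1 / Real.cos α ^ 2) •
        (((1 - t) • reMat A + t • reMat B) -
          (2 * r) • ((1 / 2 : ℝ) • (reMat A + reMat B) - harmMean (reMat A) (reMat B) (1 / 2))) -
      reMat (harmMean A B t) := by
    module
  rwa [e] at hsum
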